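/- arXiv:2307.04032 — 3 statements merged into one kernel-verified Lean document; each statement's English description precedes it below -/
import Mathlib

section
/- Let g, h : D → ℂ be nonzero Laurent series of finite order defined on a small punctured disk around 0, with ord₀(g) ≥ ord₀(h). Then for all t ≠ 0 with |t| sufficiently small, the number of nonzero solutions s of g(s) − t·h(s) = 0 that converge to 0 as t → 0, counted with multiplicity, equals ord₀(g) − ord₀(h). -/
open scoped Topology

open Metric Complex Filter Polynomial

/-- If `g = s^a·U`, `h = s^b·V` are Laurent series of finite order on a small
punctured disk (U, V holomorphic and nonvanishing at 0) with `ord₀ g = a ≥ b = ord₀ h`,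
then for all `t ≠ 0` with `|t|` small enough, the number of nonzero solutions of
`g(s) = t·h(s)` converging to `0` as `t → 0`, counted with multiplicity, equals `a - b`.
(The multiplicity at a solution `s` is the analytic order there of
`z ↦ z^{a-b}·U z - t·V z`, which is `s^{-b}·(g - t·h)`.) -/
theorem stmt_1 (g h U V : ℂ → ℂ) (a b : ℤ) (R : ℝ) (hR : 0 < R)
    (hU : ∀ z ∈ Metric.ball (0 : ℂ) R, AnalyticAt ℂ U z)
    (hV : ∀ z ∈ Metric.ball (0 : ℂ) R, AnalyticAt ℂ V z)
    (hU0 : U 0 ≠ 0) (hV0 : V 0 ≠ 0)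
    (hg : ∀ s ∈ Metric.ball (0 : ℂ) R, s ≠ 0 → g s = s ^ a * U s)
    (hh : ∀ s ∈ Metric.ball (0 : ℂ) R, s ≠ 0 → h s = s ^ b * V s)
    (hab : b ≤ a) :
    ∃ ε > 0, ε ≤ R ∧ ∀ ε' > 0, ε' ≤ ε →
      ∃ δ > 0, ∀ t : ℂ, 0 < ‖t‖ → ‖t‖ < δ →
        ∃ (S : Finset ℂ) (m : ℂ → ℕ),
          (∀ s : ℂ, s ∈ S ↔ (s ≠ 0 ∧ ‖s‖ < ε' ∧ g s = t * h s)) ∧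
          (∀ s ∈ S, ∃ hA : AnalyticAt ℂ (fun z => z ^ (a - b).toNat * U z - t * V z) s,
            analyticOrderAt (fun z => z ^ (a - b).toNat * U z - t * V z) s = (m s : ℕ∞)) ∧
          (∑ s ∈ S, (m s : ℤ)) = a - b := by
  have h0R : (0 : ℂ) ∈ Metric.ball (0 : ℂ) R := mem_ball_self hR
  have hUc : ContinuousAt U 0 := (hU 0 h0R).continuousAt
  have hVc : ContinuousAt V 0 := (hV 0 h0R).continuousAt
  rcases eq_or_lt_of_le hab with hba | hba
  · -- case a = b : no solutions
    have hU0pos : (0:ℝ) < ‖U 0‖ := norm_pos_iff.mpr hU0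
    have h1 : ∀ᶠ z in 𝓝 (0:ℂ), ‖U 0‖ / 2 < ‖U z‖ :=
      hUc.norm.eventually (eventually_gt_nhds (by linarith))
    have h2 : ∀ᶠ z in 𝓝 (0:ℂ), ‖V z‖ < ‖V 0‖ + 1 :=
      hVc.norm.eventually (eventually_lt_nhds (lt_add_one _))
    have h3 : ∀ᶠ z in 𝓝 (0:ℂ), z ∈ Metric.ball (0:ℂ) R := Metric.ball_mem_nhds 0 hR
    obtain ⟨ε0, hε0, hball⟩ := Metric.eventually_nhds_iff_ball.mp ((h1.and h2).and h3)
    refine ⟨min ε0 R, by positivity, min_le_right _ _, ?_⟩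
    intro ε' hε'pos hε'le
    refine ⟨(‖U 0‖ / 2) / (‖V 0‖ + 1), by positivity, ?_⟩
    intro t ht htδ
    refine ⟨∅, fun _ => 0, ?_, by simp, by simp [← hba]⟩
    intro s
    simp only [Finset.notMem_empty, false_iff, not_and]
    intro hs0 hsε hgh
    have hsball : s ∈ Metric.ball (0:ℂ) ε0 :=
      mem_ball_zero_iff.mpr (lt_of_lt_of_le hsε (hε'le.trans (min_le_left _ _)))
    obtain ⟨⟨hU2, hV2⟩, hsR⟩ := hball s hsball
    rw [hg s hsR hs0, hh s hsR hs0, ← hba] at hgh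
    have hsb : (s:ℂ) ^ b ≠ 0 := zpow_ne_zero _ hs0
    have hUV : U s = t * V s := by
      apply mul_left_cancel₀ hsb
      linear_combination hgh
    have hnorm : ‖U s‖ = ‖t‖ * ‖V s‖ := by rw [hUV, norm_mul]
    have hVnn : (0:ℝ) ≤ ‖V s‖ := norm_nonneg _
    have htnn : (0:ℝ) ≤ ‖t‖ := norm_nonneg _
    have hV0nn : (0:ℝ) < ‖V 0‖ + 1 := by positivity
    have hmul : ‖t‖ * ‖V s‖ < (‖U 0‖ / 2 / (‖V 0‖ + 1)) * (‖V 0‖ + 1) :=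
      mul_lt_mul'' htδ hV2 htnn hVnn
    rw [div_mul_cancel₀ _ (ne_of_gt hV0nn)] at hmul
    linarith
  · -- case b < a
    set n : ℕ := (a - b).toNat with hn_def
    have hn : 0 < n := by omega
    have hna : (n : ℤ) = a - b := Int.toNat_of_nonneg (by omega)
    -- radius r1 : U, V nonvanishing, inside ball R
    obtain ⟨r1, hr1pos, hr1⟩ : ∃ r1 > 0, ∀ z ∈ Metric.ball (0:ℂ) r1,
        (U z ≠ 0 ∧ V z ≠ 0) ∧ z ∈ Metric.ball (0:ℂ) R := by
      have h1 : ∀ᶠ z in 𝓝 (0:ℂ), U z ≠ 0 := hUc.eventually_ne hU0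
      have h2 : ∀ᶠ z in 𝓝 (0:ℂ), V z ≠ 0 := hVc.eventually_ne hV0
      have h3 : ∀ᶠ z in 𝓝 (0:ℂ), z ∈ Metric.ball (0:ℂ) R := Metric.ball_mem_nhds 0 hR
      obtain ⟨ε0, hε0, hb⟩ := Metric.eventually_nhds_iff_ball.mp ((h1.and h2).and h3)
      exact ⟨ε0, hε0, hb⟩
    set W : ℂ → ℂ := fun z => V z / U z with hW_def
    have hW0 : W 0 ≠ 0 := div_ne_zero hV0 hU0
    have hWan : ∀ z ∈ Metric.ball (0:ℂ) r1, AnalyticAt ℂ W z := fun z hz =>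
      (hV z (hr1 z hz).2).div (hU z (hr1 z hz).2) (hr1 z hz).1.1
    obtain ⟨c, hc⟩ := IsAlgClosed.exists_pow_nat_eq (W 0) hn
    have hc0 : c ≠ 0 := by
      intro hcc
      apply hW0
      rw [← hc, hcc, zero_pow hn.ne']
    set φ : ℂ → ℂ := fun z => c * Complex.exp (Complex.log (W z / W 0) / (n:ℂ)) with hφ_def
    -- radius r2 : W z / W 0 in slitPlane
    obtain ⟨r2, hr2pos, hr2le, hr2⟩ : ∃ r2 > 0, r2 ≤ r1 ∧ ∀ z ∈ Metric.ball (0:ℂ) r2,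
        W z / W 0 ∈ Complex.slitPlane := by
      have hWc : ContinuousAt (fun z => W z / W 0) 0 :=
        ((hWan 0 (mem_ball_self hr1pos)).continuousAt).div_const _
      have h1 : ∀ᶠ z in 𝓝 (0:ℂ), W z / W 0 ∈ Complex.slitPlane := by
        apply hWc.eventually_mem
        apply Complex.isOpen_slitPlane.mem_nhds
        simp only [div_self hW0]
        exact Complex.one_mem_slitPlane
      obtain ⟨ε0, hε0, hb⟩ := Metric.eventually_nhds_iff_ball.mp h1
      exact ⟨min ε0 r1, by positivity, min_le_right _ _,
        fun z hz => hb z (ball_subset_ball (min_le_left _ _) hz)⟩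
    have hncast : (n : ℂ) ≠ 0 := Nat.cast_ne_zero.mpr hn.ne'
    have hφan : ∀ z ∈ Metric.ball (0:ℂ) r2, AnalyticAt ℂ φ z := by
      intro z hz
      apply analyticAt_const.mul
      apply AnalyticAt.cexp
      apply AnalyticAt.div _ analyticAt_const hncast
      exact AnalyticAt.clog
        ((hWan z (ball_subset_ball hr2le hz)).div analyticAt_const hW0) (hr2 z hz)
    have hφpow : ∀ z ∈ Metric.ball (0:ℂ) r2, φ z ^ n = W z := by
      intro z hz
      have hWz : W z / W 0 ≠ 0 := Complex.slitPlane_ne_zero (hr2 z hz)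
      have : φ z ^ n = c ^ n * Complex.exp ((n:ℂ) * (Complex.log (W z / W 0) / (n:ℂ))) := by
        rw [hφ_def, mul_pow, Complex.exp_nat_mul]
      rw [this, hc, mul_div_cancel₀ _ hncast, Complex.exp_log hWz]
      field_simp
    have hφ0 : ∀ z ∈ Metric.ball (0:ℂ) r2, φ z ≠ 0 := fun z hz =>
      mul_ne_zero hc0 (Complex.exp_ne_zero _)
    set ψ : ℂ → ℂ := fun z => z / φ z with hψ_def
    have hψan : ∀ z ∈ Metric.ball (0:ℂ) r2, AnalyticAt ℂ ψ z := fun z hz =>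
      analyticAt_id.div (hφan z hz) (hφ0 z hz)
    have h0r2 : (0:ℂ) ∈ Metric.ball (0:ℂ) r2 := mem_ball_self hr2pos
    have hψ0 : ψ 0 = 0 := zero_div _
    have hd0 : deriv ψ 0 ≠ 0 := by
      have hφd : HasDerivAt φ (deriv φ 0) 0 := ((hφan 0 h0r2).differentiableAt).hasDerivAt
      have hψd : HasDerivAt ψ ((1 * φ 0 - 0 * deriv φ 0) / φ 0 ^ 2) 0 :=
        (hasDerivAt_id 0).div hφd (hφ0 0 h0r2)
      rw [hψd.deriv]
      have hφ00 := hφ0 0 h0r2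
      field_simp
      simpa using hφ00
    have hψstrict : HasStrictDerivAt ψ (deriv ψ 0) 0 := by
      obtain ⟨p, hp⟩ := hψan 0 h0r2
      have := hp.hasStrictDerivAt
      rwa [← hp.deriv] at this
    -- radius r3 : deriv ψ nonvanishing
    obtain ⟨r3, hr3pos, hr3le, hr3⟩ : ∃ r3 > 0, r3 ≤ r2 ∧ ∀ z ∈ Metric.ball (0:ℂ) r3,
        deriv ψ z ≠ 0 := by
      have hψon : AnalyticOnNhd ℂ ψ (Metric.ball (0:ℂ) r2) := fun z hz => hψan z hz
      have hda : AnalyticOnNhd ℂ (deriv ψ) (Metric.ball (0:ℂ) r2) := hψon.deriv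
      have h1 : ∀ᶠ z in 𝓝 (0:ℂ), deriv ψ z ≠ 0 :=
        (hda 0 h0r2).continuousAt.eventually_ne hd0
      obtain ⟨ε0, hε0, hb⟩ := Metric.eventually_nhds_iff_ball.mp h1
      exact ⟨min ε0 r2, by positivity, min_le_right _ _,
        fun z hz => hb z (ball_subset_ball (min_le_left _ _) hz)⟩
    set F := (hψstrict.hasStrictFDerivAt_equiv hd0).toOpenPartialHomeomorph ψ with hF_def
    have hF0 : (0:ℂ) ∈ F.source :=
      (hψstrict.hasStrictFDerivAt_equiv hd0).mem_toOpenPartialHomeomorph_source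
    have hFcoe : ∀ x, F x = ψ x := fun x => rfl
    obtain ⟨ε0, hε0pos, hε0sub⟩ := Metric.isOpen_iff.mp F.open_source 0 hF0
    refine ⟨min (min ε0 r3) R, by positivity, min_le_right _ _, ?_⟩
    intro ε' hε'pos hε'le
    have hε'r3 : ε' ≤ r3 := hε'le.trans ((min_le_left _ _).trans (min_le_right _ _))
    have hε'ε0 : ε' ≤ ε0 := hε'le.trans ((min_le_left _ _).trans (min_le_left _ _))
    have hε'R : ε' ≤ R := hε'le.trans (min_le_right _ _)
    have hballr2 : Metric.ball (0:ℂ) ε' ⊆ Metric.ball 0 r2 :=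
      ball_subset_ball (hε'r3.trans hr3le)
    have hballsrc : Metric.ball (0:ℂ) ε' ⊆ F.source :=
      (ball_subset_ball hε'ε0).trans hε0sub
    -- image of the ball is a neighbourhood of 0
    have hmap : Filter.map ψ (𝓝 0) = 𝓝 (0:ℂ) := by
      have := hψstrict.map_nhds_eq hd0
      rwa [hψ0] at this
    have himg : ψ '' Metric.ball (0:ℂ) ε' ∈ 𝓝 (0:ℂ) := by
      rw [← hmap]
      exact Filter.image_mem_map (Metric.ball_mem_nhds _ hε'pos)
    obtain ⟨ρ, hρpos, hρ⟩ := Metric.nhds_basis_ball.mem_iff.mp himg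
    refine ⟨ρ ^ n, pow_pos hρpos n, ?_⟩
    intro t ht htδ
    have ht0 : t ≠ 0 := norm_pos_iff.mp ht
    obtain ⟨τ0, hτ0⟩ := IsAlgClosed.exists_pow_nat_eq t hn
    have hτ00 : τ0 ≠ 0 := by
      intro hh'
      rw [hh', zero_pow hn.ne'] at hτ0
      exact ht0 hτ0.symm
    have hξ := Complex.isPrimitiveRoot_exp n hn.ne'
    set T : Finset ℂ := (nthRootsFinset n (1 : ℂ)).image (fun ζ => ζ * τ0) with hT_def
    have hmulinj : Function.Injective (fun ζ : ℂ => ζ * τ0) := fun x y hxy =>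
      mul_right_cancel₀ hτ00 hxy
    have hmemT : ∀ τ, τ ∈ T ↔ τ ^ n = t := by
      intro τ
      rw [hT_def, Finset.mem_image]
      constructor
      · rintro ⟨ζ, hζ, rfl⟩
        rw [mul_pow, (Polynomial.mem_nthRootsFinset hn 1).mp hζ, one_mul, hτ0]
      · intro hτ
        refine ⟨τ / τ0, ?_, div_mul_cancel₀ _ hτ00⟩
        rw [Polynomial.mem_nthRootsFinset hn 1, div_pow, hτ, ← hτ0, div_self]
        rw [hτ0]
        exact ht0
    have hprodT : ∀ x : ℂ, ∏ τ ∈ T, (x - τ) = x ^ n - t := by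
      intro x
      rw [hT_def, Finset.prod_image (fun ζ₁ _ ζ₂ _ hzz => hmulinj hzz), ← hτ0]
      exact (hξ.pow_sub_pow_eq_prod_sub_mul x τ0 hn).symm
    have hcardT : T.card = n := by
      rw [hT_def, Finset.card_image_of_injective _ hmulinj, hξ.card_nthRootsFinset]
    have hnormT : ∀ τ ∈ T, ‖τ‖ < ρ := by
      intro τ hτ
      have h1 : ‖τ‖ ^ n = ‖t‖ := by rw [← norm_pow, (hmemT τ).mp hτ]
      by_contra hcon
      push_neg at hcon
      have := pow_le_pow_left₀ hρpos.le hcon n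
      rw [h1] at this
      linarith
    -- key identity
    have hkeyid : ∀ z ∈ Metric.ball (0:ℂ) r2, z ^ n * U z - t * V z = V z * (ψ z ^ n - t) := by
      intro z hz
      have hz1 : z ∈ Metric.ball (0:ℂ) r1 := ball_subset_ball hr2le hz
      have hUz : U z ≠ 0 := (hr1 z hz1).1.1
      have hVz : V z ≠ 0 := (hr1 z hz1).1.2
      have hψpow : V z * ψ z ^ n = z ^ n * U z := by
        have h1 : ψ z ^ n = z ^ n / φ z ^ n := div_pow z (φ z) n
        have h2 : W z = V z / U z := rfl
        rw [h1, hφpow z hz, h2]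
        field_simp
      rw [mul_sub, hψpow]
      ring
    -- the solution equivalence
    have heq : ∀ s : ℂ, ‖s‖ < ε' → s ≠ 0 → (g s = t * h s ↔ ψ s ^ n = t) := by
      intro s hsε hs0
      have hsr2 : s ∈ Metric.ball (0:ℂ) r2 := hballr2 (mem_ball_zero_iff.mpr hsε)
      have hsr1 : s ∈ Metric.ball (0:ℂ) r1 := ball_subset_ball hr2le hsr2
      have hsR : s ∈ Metric.ball (0:ℂ) R := (hr1 s hsr1).2
      have hVs : V s ≠ 0 := (hr1 s hsr1).1.2
      have h1 : s ^ a = s ^ b * s ^ (n:ℕ) := by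
        rw [← zpow_natCast s n, ← zpow_add₀ hs0, hna]
        congr 1
        omega
      rw [hg s hsR hs0, hh s hsR hs0]
      constructor
      · intro hgh
        have h2 : s ^ b * (s ^ (n:ℕ) * U s) = s ^ b * (t * V s) := by
          rw [← mul_assoc, ← h1]
          linear_combination hgh
        have h3 := mul_left_cancel₀ (zpow_ne_zero b hs0) h2
        have h4 := hkeyid s hsr2
        rw [show s ^ n * U s - t * V s = 0 by rw [h3]; ring] at h4
        have h5 := (mul_eq_zero.mp h4.symm).resolve_left hVs
        exact sub_eq_zero.mp h5
      · intro hψt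
        have h4 := hkeyid s hsr2
        rw [hψt, sub_self, mul_zero] at h4
        have h3 : s ^ (n:ℕ) * U s = t * V s := sub_eq_zero.mp h4
        calc s ^ a * U s = s ^ b * (s ^ (n:ℕ) * U s) := by rw [h1]; ring
          _ = s ^ b * (t * V s) := by rw [h3]
          _ = t * (s ^ b * V s) := by ring
    -- inverse images of roots
    have hsymm : ∀ τ ∈ T, F.symm τ ∈ Metric.ball (0:ℂ) ε' ∧ ψ (F.symm τ) = τ := by
      intro τ hτ
      obtain ⟨s', hs', hψs'⟩ := hρ (mem_ball_zero_iff.mpr (hnormT τ hτ))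
      have hsymmτ : F.symm τ = s' := by
        rw [← hψs', ← hFcoe s']
        exact F.left_inv (hballsrc hs')
      rw [hsymmτ]
      exact ⟨hs', hψs'⟩
    set S : Finset ℂ := T.image (fun τ => F.symm τ) with hS_def
    have hmemS : ∀ s : ℂ, s ∈ S ↔ (s ≠ 0 ∧ ‖s‖ < ε' ∧ g s = t * h s) := by
      intro s
      rw [hS_def, Finset.mem_image]
      constructor
      · rintro ⟨τ, hτ, rfl⟩
        obtain ⟨hball', hψτ⟩ := hsymm τ hτ
        have hτn : τ ^ n = t := (hmemT τ).mp hτ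
        have hsne : F.symm τ ≠ 0 := by
          intro hzero
          rw [hzero, hψ0] at hψτ
          rw [← hψτ, zero_pow hn.ne'] at hτn
          exact ht0 hτn.symm
        have hnorm : ‖F.symm τ‖ < ε' := mem_ball_zero_iff.mp hball'
        refine ⟨hsne, hnorm, ?_⟩
        rw [heq _ hnorm hsne, hψτ]
        exact hτn
      · rintro ⟨hs0, hsε, hgh⟩
        have hψn : ψ s ^ n = t := (heq s hsε hs0).mp hgh
        refine ⟨ψ s, (hmemT _).mpr hψn, ?_⟩
        rw [← hFcoe s]
        exact F.left_inv (hballsrc (mem_ball_zero_iff.mpr hsε))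
    have hinj : Set.InjOn (fun τ => F.symm τ) (T : Set ℂ) := by
      intro τ1 h1 τ2 h2 h12
      rw [← (hsymm τ1 h1).2, ← (hsymm τ2 h2).2]
      simp only at h12
      rw [h12]
    refine ⟨S, fun _ => 1, hmemS, ?_, ?_⟩
    · -- multiplicities
      intro s hsS
      obtain ⟨hs0, hsε, hgh⟩ := (hmemS s).mp hsS
      have hsr2 : s ∈ Metric.ball (0:ℂ) r2 := hballr2 (mem_ball_zero_iff.mpr hsε)
      have hsr1 : s ∈ Metric.ball (0:ℂ) r1 := ball_subset_ball hr2le hsr2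
      have hsr3 : s ∈ Metric.ball (0:ℂ) r3 := ball_subset_ball hε'r3 (mem_ball_zero_iff.mpr hsε)
      have hsR : s ∈ Metric.ball (0:ℂ) R := (hr1 s hsr1).2
      have hVs : V s ≠ 0 := (hr1 s hsr1).1.2
      have hψT : ψ s ∈ T := (hmemT _).mpr ((heq s hsε hs0).mp hgh)
      have hA : AnalyticAt ℂ (fun z => z ^ n * U z - t * V z) s :=
        ((analyticAt_id.pow n).mul (hU s hsR)).sub (analyticAt_const.mul (hV s hsR))
      refine ⟨hA, ?_⟩
      have : analyticOrderAt (fun z => z ^ n * U z - t * V z) s = (1 : ℕ) := by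
        rw [hA.analyticOrderAt_eq_natCast]
        have hdslope : AnalyticAt ℂ (dslope ψ s) s := by
          obtain ⟨p, hp⟩ := hψan s hsr2
          exact ⟨p.fslope, hp.has_fpower_series_dslope_fslope⟩
        refine ⟨fun z => V z * (dslope ψ s z * ∏ τ ∈ T.erase (ψ s), (ψ z - τ)), ?_, ?_, ?_⟩
        · exact (hV s hsR).mul (hdslope.mul ((T.erase (ψ s)).analyticAt_fun_prod
            (fun τ _ => (hψan s hsr2).sub analyticAt_const)))
        · apply mul_ne_zero hVs
          apply mul_ne_zero
          · rw [dslope_same]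
            exact hr3 s hsr3
          · rw [Finset.prod_ne_zero_iff]
            intro τ hτ
            exact sub_ne_zero.mpr (Ne.symm (Finset.ne_of_mem_erase hτ))
        · filter_upwards [isOpen_ball.mem_nhds hsr2] with z hz
          have hds : ψ z - ψ s = (z - s) * dslope ψ s z := by
            have := sub_smul_dslope ψ s z
            rw [smul_eq_mul] at this
            rw [this]
          rw [hkeyid z hz, ← hprodT (ψ z), ← Finset.mul_prod_erase _ _ hψT, hds,
            pow_one, smul_eq_mul]
          ring
      simpa using this
    · -- the sum
      have hcardS : S.card = n := by
        rw [hS_def, Finset.card_image_of_injOn hinj, hcardT]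
      rw [Finset.sum_const, hcardS]
      simpa using hna
end

section
/- Let f(x,y) = x + x²y. For all t ≠ 0, the polynomial f_t := f − t(x+y) has exactly two critical points in ℂ², both nondegenerate (Morse), and as t → 0 both critical points escape to infinity (their norms tend to ∞). -/
/-- The deformed polynomial `f_t(x,y) = x + x²y − t(x+y)`. -/
noncomputable def F8 (t x y : ℂ) : ℂ := x + x ^ 2 * y - t * (x + y)

/-- Partial derivative of `F8 t` in `x`. -/
noncomputable def F8x (t : ℂ) (p : ℂ × ℂ) : ℂ := deriv (fun x => F8 t x p.2) p.1

/-- Partial derivative of `F8 t` in `y`. -/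
noncomputable def F8y (t : ℂ) (p : ℂ × ℂ) : ℂ := deriv (fun y => F8 t p.1 y) p.2

/-- Critical locus of `F8 t`. -/
noncomputable def Crit8 (t : ℂ) : Set (ℂ × ℂ) := {p | F8x t p = 0 ∧ F8y t p = 0}

/-- Hessian determinant of `F8 t`. -/
noncomputable def Hess8 (t : ℂ) (p : ℂ × ℂ) : ℂ :=
  deriv (fun x => F8x t (x, p.2)) p.1 * deriv (fun y => F8y t (p.1, y)) p.2
    - deriv (fun y => F8x t (p.1, y)) p.2 * deriv (fun x => F8y t (x, p.2)) p.1

lemma F8x_eq (t : ℂ) (p : ℂ × ℂ) : F8x t p = 1 + 2 * p.1 * p.2 - t := by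
  have h1 : HasDerivAt (fun x : ℂ => x) 1 p.1 := hasDerivAt_id p.1
  have h2 : HasDerivAt (fun x : ℂ => x ^ 2 * p.2) (2 * p.1 * p.2) p.1 := by
    have := (hasDerivAt_pow 2 p.1).mul_const p.2
    refine this.congr_deriv ?_; push_cast; ring
  have h3 : HasDerivAt (fun x : ℂ => t * (x + p.2)) t p.1 := by
    simpa using (h1.add_const p.2).const_mul t
  have h : HasDerivAt (fun x : ℂ => x + x ^ 2 * p.2 - t * (x + p.2))
      (1 + 2 * p.1 * p.2 - t) p.1 := (h1.add h2).sub h3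
  simpa [F8x, F8] using h.deriv

lemma F8y_eq (t : ℂ) (p : ℂ × ℂ) : F8y t p = p.1 ^ 2 - t := by
  have h1 : HasDerivAt (fun y : ℂ => p.1 + p.1 ^ 2 * y) (p.1 ^ 2) p.2 := by
    simpa using ((hasDerivAt_id p.2).const_mul (p.1 ^ 2)).const_add p.1
  have h3 : HasDerivAt (fun y : ℂ => t * (p.1 + y)) t p.2 := by
    simpa using ((hasDerivAt_id p.2).const_add p.1).const_mul t
  have h : HasDerivAt (fun y : ℂ => p.1 + p.1 ^ 2 * y - t * (p.1 + y))
      (p.1 ^ 2 - t) p.2 := h1.sub h3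
  simpa [F8y, F8] using h.deriv

lemma Hess8_eq (t : ℂ) (p : ℂ × ℂ) : Hess8 t p = -(4 * p.1 ^ 2) := by
  have e1 : (fun x : ℂ => F8x t (x, p.2)) = fun x => 1 + 2 * x * p.2 - t := by
    funext x; simpa using F8x_eq t (x, p.2)
  have e2 : (fun y : ℂ => F8y t (p.1, y)) = fun _ => p.1 ^ 2 - t := by
    funext y; simpa using F8y_eq t (p.1, y)
  have e3 : (fun y : ℂ => F8x t (p.1, y)) = fun y => 1 + 2 * p.1 * y - t := by
    funext y; simpa using F8x_eq t (p.1, y)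
  have e4 : (fun x : ℂ => F8y t (x, p.2)) = fun x => x ^ 2 - t := by
    funext x; simpa using F8y_eq t (x, p.2)
  have d1 : deriv (fun x : ℂ => 1 + 2 * x * p.2 - t) p.1 = 2 * p.2 := by
    have : HasDerivAt (fun x : ℂ => 1 + 2 * x * p.2 - t) (2 * p.2) p.1 := by
      have h := (((hasDerivAt_id p.1).const_mul 2).mul_const p.2).const_add 1
      have h2 := h.sub_const t
      refine h2.congr_deriv ?_; ring
    exact this.deriv
  have d2 : deriv (fun _ : ℂ => p.1 ^ 2 - t) p.2 = 0 := deriv_const _ _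
  have d3 : deriv (fun y : ℂ => 1 + 2 * p.1 * y - t) p.2 = 2 * p.1 := by
    have : HasDerivAt (fun y : ℂ => 1 + 2 * p.1 * y - t) (2 * p.1) p.2 := by
      have h := (((hasDerivAt_id p.2).const_mul (2 * p.1)).const_add 1).sub_const t
      refine h.congr_deriv ?_; ring
    exact this.deriv
  have d4 : deriv (fun x : ℂ => x ^ 2 - t) p.1 = 2 * p.1 := by
    have : HasDerivAt (fun x : ℂ => x ^ 2 - t) (2 * p.1) p.1 := by
      have h := (hasDerivAt_pow 2 p.1).sub_const t
      refine h.congr_deriv ?_; push_cast; ring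
    exact this.deriv
  rw [Hess8, e1, e2, e3, e4, d1, d2, d3, d4]; ring


/-- For all `t ≠ 0`, `f_t = x + x²y − t(x+y)` has exactly two critical points
in `ℂ²`, both nondegenerate (Morse), and as `t → 0` both critical points escape to infinity:
for every `R > 0` there is `δ > 0` such that for `0 < |t| < δ` every critical point of `f_t`
has norm `> R`. -/
theorem stmt_8 :
    (∀ t : ℂ, t ≠ 0 → ∃ p q : ℂ × ℂ, p ≠ q ∧ Crit8 t = {p, q} ∧
        Hess8 t p ≠ 0 ∧ Hess8 t q ≠ 0) ∧
    (∀ R > (0 : ℝ), ∃ δ > (0 : ℝ), ∀ t : ℂ, 0 < ‖t‖ → ‖t‖ < δ →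
        ∀ p ∈ Crit8 t, R < ‖p‖) := by
  constructor
  · intro t ht
    obtain ⟨s, hs⟩ : ∃ s : ℂ, s ^ 2 = t := by
      exact IsAlgClosed.exists_pow_nat_eq t (n := 2) (by norm_num)
    have hs0 : s ≠ 0 := by
      intro h; apply ht; rw [← hs, h]; ring
    refine ⟨(s, (t - 1) / (2 * s)), (-s, (t - 1) / (2 * -s)), ?_, ?_, ?_, ?_⟩
    · intro h
      have h1 : s = -s := congrArg Prod.fst h
      have : s = 0 := by linear_combination h1 / 2
      exact hs0 this
    · ext r
      simp only [Crit8, Set.mem_setOf_eq, F8x_eq, F8y_eq, Set.mem_insert_iff,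
        Set.mem_singleton_iff, Prod.ext_iff]
      constructor
      · rintro ⟨h1, h2⟩
        have hx : (r.1 - s) * (r.1 + s) = 0 := by linear_combination h2 - hs
        rcases mul_eq_zero.mp hx with h | h
        · left
          have ha : r.1 = s := by linear_combination h
          refine ⟨ha, ?_⟩
          rw [eq_div_iff (by simpa using hs0)]
          linear_combination h1 - 2 * r.2 * ha
        · right
          have ha : r.1 = -s := by linear_combination h
          refine ⟨ha, ?_⟩
          rw [eq_div_iff (by simpa using hs0)]
          linear_combination h1 - 2 * r.2 * ha
      · rintro (⟨ha, hb⟩ | ⟨ha, hb⟩) <;> rw [ha, hb] <;>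
          exact ⟨by field_simp; try ring, by linear_combination hs⟩
    · rw [Hess8_eq]
      intro h
      have h' : -(4 * s ^ 2) = 0 := h
      apply ht
      linear_combination -h' / 4 - hs
    · rw [Hess8_eq]
      intro h
      have h' : -(4 * (-s) ^ 2) = 0 := h
      apply ht
      linear_combination -h' / 4 - hs
  · intro R hR
    refine ⟨min (1/2) (1 / (16 * R ^ 2)), by positivity, fun t ht0 htδ p hp => ?_⟩
    obtain ⟨h1, h2⟩ := hp
    rw [F8x_eq] at h1; rw [F8y_eq] at h2
    have hxy : 2 * p.1 * p.2 = t - 1 := by linear_combination h1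
    have hx2 : p.1 ^ 2 = t := by linear_combination h2
    have ht2 : ‖t‖ < 1/2 := lt_of_lt_of_le htδ (min_le_left _ _)
    have htR : ‖t‖ < 1 / (16 * R ^ 2) := lt_of_lt_of_le htδ (min_le_right _ _)
    have hnorm1 : (1:ℝ)/2 ≤ ‖t - 1‖ := by
      have h := norm_sub_norm_le (1 : ℂ) t
      rw [norm_sub_rev] at h
      simp only [norm_one] at h
      linarith
    by_contra hc
    push_neg at hc
    have hy : ‖p.2‖ ≤ ‖p‖ := norm_snd_le p
    have hyR : ‖p.2‖ ≤ R := le_trans hy hc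
    have hxx : ‖p.1‖ ^ 2 = ‖t‖ := by rw [← hx2]; simp [norm_pow]
    have h2xy : 2 * ‖p.1‖ * ‖p.2‖ = ‖t - 1‖ := by
      rw [← hxy]
      simp [norm_mul]
    have hx_pos : 0 < ‖p.1‖ := by
      nlinarith [norm_nonneg p.1, hxx, ht0]
    have hh : (1:ℝ)/2 ≤ 2 * ‖p.1‖ * R := by
      calc (1:ℝ)/2 ≤ ‖t - 1‖ := hnorm1
        _ = 2 * ‖p.1‖ * ‖p.2‖ := h2xy.symm
        _ ≤ 2 * ‖p.1‖ * R := by nlinarith [norm_nonneg p.1]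
    have hx_lb : 1 / (4 * R) ≤ ‖p.1‖ := by
      rw [div_le_iff₀ (by positivity)]; nlinarith
    have : 1 / (16 * R ^ 2) ≤ ‖t‖ := by
      rw [← hxx, div_le_iff₀ (by positivity)]
      nlinarith
    linarith
end

section
/- Let f(x,y) = xy + (1/3)x³y² and ℓ(x,y) = x + y. There is a branch of the polar curve {y − x + x²y² − (2/3)x³y = 0} at infinity parametrized by x(s) = s, y(s) = −1/s² + higher order (Laurent) terms, and along it ord₀ f(x(s),y(s)) = −1 and ord₀ ℓ(x(s),y(s)) = −2; in particular ‖f(x(s),y(s))‖ → ∞ as s → 0, and ord₀(f∘γ) − ord₀(ℓ∘γ) = 1. -/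
open scoped Topology

noncomputable def gfun (s : ℂ) : ℂ := (1 - (2/3) * s ^ 3) ^ 2 + 4 * s ^ 3

noncomputable def rfun (s : ℂ) : ℂ := gfun s ^ ((1:ℂ)/2)

noncomputable def wfun (s : ℂ) : ℂ := (-(1 - (2/3) * s ^ 3) - rfun s) / 2

lemma cube_anal : AnalyticAt ℂ (fun s : ℂ => s ^ 3) 0 := analyticAt_id.pow 3

lemma gfun_anal : AnalyticAt ℂ gfun 0 := by
  unfold gfun
  exact ((analyticAt_const.sub (analyticAt_const.mul cube_anal)).pow 2).add
    (analyticAt_const.mul cube_anal)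

lemma gfun_zero : gfun 0 = 1 := by simp [gfun]

lemma rfun_anal : AnalyticAt ℂ rfun 0 := by
  apply AnalyticAt.cpow gfun_anal analyticAt_const
  rw [gfun_zero]; exact Complex.one_mem_slitPlane

lemma wfun_anal : AnalyticAt ℂ wfun 0 := by
  unfold wfun
  exact (((analyticAt_const.sub (analyticAt_const.mul cube_anal)).neg).sub rfun_anal).div
    analyticAt_const (by norm_num)

lemma rfun_zero : rfun 0 = 1 := by
  simp [rfun, gfun_zero]

lemma wfun_zero : wfun 0 = -1 := by
  simp [wfun, rfun_zero]; ring

lemma rfun_sq : ∀ᶠ s in 𝓝 (0 : ℂ), rfun s ^ 2 = gfun s := by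
  have hg : ∀ᶠ s in 𝓝 (0 : ℂ), gfun s ≠ 0 := by
    have h1 : Filter.Tendsto gfun (𝓝 0) (𝓝 1) := by
      rw [← gfun_zero]; exact gfun_anal.continuousAt
    exact h1.eventually_ne one_ne_zero
  filter_upwards [hg] with s hs
  have : rfun s ^ 2 = gfun s ^ ((1:ℂ)/2) * gfun s ^ ((1:ℂ)/2) := by
    rw [rfun]; ring
  rw [this, ← Complex.cpow_add _ _ hs]
  norm_num

lemma wfun_quad : ∀ᶠ s in 𝓝 (0 : ℂ),
    wfun s ^ 2 + (1 - (2/3) * s ^ 3) * wfun s - s ^ 3 = 0 := by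
  filter_upwards [rfun_sq] with s hs
  have hr : rfun s ^ 2 = (1 - (2/3) * s ^ 3) ^ 2 + 4 * s ^ 3 := by rw [hs, gfun]
  unfold wfun
  linear_combination hr / 4

/-- For `f(x,y) = xy + (1/3)x³y²`, `ℓ(x,y) = x + y`: there is a branch of the
polar curve `{y − x + x²y² − (2/3)x³y = 0}` at infinity parametrized by `x(s) = s`,
`y(s) = −1/s² + h.o.t.` (i.e. `y(s) = s^{-2}·w(s)` with `w(0) = −1`), along which
`ord₀(f∘γ) = −1`, `ord₀(ℓ∘γ) = −2`; in particular `‖f∘γ‖ → ∞` as `s → 0`, and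
`ord₀(f∘γ) − ord₀(ℓ∘γ) = 1`. -/
theorem stmt_13 :
    ∃ (y w : ℂ → ℂ), AnalyticAt ℂ w 0 ∧ w 0 = -1 ∧
      (∀ᶠ s in 𝓝[≠] (0 : ℂ), y s = s ^ (-2 : ℤ) * w s) ∧
      (∀ᶠ s in 𝓝[≠] (0 : ℂ), y s - s + s ^ 2 * (y s) ^ 2 - (2 / 3) * s ^ 3 * y s = 0) ∧
      (∃ u : ℂ → ℂ, AnalyticAt ℂ u 0 ∧ u 0 ≠ 0 ∧
        ∀ᶠ s in 𝓝[≠] (0 : ℂ), s * y s + (1 / 3) * s ^ 3 * (y s) ^ 2 = s ^ (-1 : ℤ) * u s) ∧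
      (∃ v : ℂ → ℂ, AnalyticAt ℂ v 0 ∧ v 0 ≠ 0 ∧
        ∀ᶠ s in 𝓝[≠] (0 : ℂ), s + y s = s ^ (-2 : ℤ) * v s) ∧
      Filter.Tendsto (fun s : ℂ => ‖s * y s + (1 / 3) * s ^ 3 * (y s) ^ 2‖)
        (𝓝[≠] (0 : ℂ)) Filter.atTop ∧
      ((-1 : ℤ) - (-2) = 1) := by
  have key : ∀ s : ℂ, s ≠ 0 → s ^ (-2 : ℤ) = s⁻¹ * s⁻¹ := by
    intro s hs
    rw [zpow_neg, zpow_two, mul_inv]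
  refine ⟨fun s => s ^ (-2 : ℤ) * wfun s, wfun, wfun_anal, wfun_zero,
    Filter.Eventually.of_forall fun s => rfl, ?_, ?_, ?_, ?_, by norm_num⟩
  · filter_upwards [wfun_quad.filter_mono nhdsWithin_le_nhds, self_mem_nhdsWithin] with s hq hs
    have hs : (s : ℂ) ≠ 0 := hs
    rw [key s hs]
    have h3 : s⁻¹ * s⁻¹ * wfun s - s + s ^ 2 * (s⁻¹ * s⁻¹ * wfun s) ^ 2
        - 2 / 3 * s ^ 3 * (s⁻¹ * s⁻¹ * wfun s)
        = s⁻¹ * s⁻¹ * (wfun s ^ 2 + (1 - (2/3) * s ^ 3) * wfun s - s ^ 3) := by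
      field_simp
      ring
    rw [h3, hq, mul_zero]
  · refine ⟨fun s => wfun s + (1/3) * wfun s ^ 2, wfun_anal.add
      (analyticAt_const.mul (wfun_anal.pow 2)), by simp [wfun_zero]; norm_num, ?_⟩
    filter_upwards [self_mem_nhdsWithin] with s hs
    have hs : (s : ℂ) ≠ 0 := hs
    rw [key s hs, zpow_neg, zpow_one]
    field_simp
  · refine ⟨fun s => s ^ 3 + wfun s, cube_anal.add wfun_anal,
      by simp [wfun_zero], ?_⟩
    filter_upwards [self_mem_nhdsWithin] with s hs
    have hs : (s : ℂ) ≠ 0 := hs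
    rw [key s hs]
    field_simp
  · have heq : ∀ᶠ s in 𝓝[≠] (0 : ℂ),
        ‖s * (s ^ (-2 : ℤ) * wfun s) + (1/3) * s ^ 3 * (s ^ (-2 : ℤ) * wfun s) ^ 2‖
          = ‖s‖⁻¹ * ‖wfun s + (1/3) * wfun s ^ 2‖ := by
      filter_upwards [self_mem_nhdsWithin] with s hs
      have hs : (s : ℂ) ≠ 0 := hs
      have h1 : s * (s ^ (-2 : ℤ) * wfun s) + (1/3) * s ^ 3 * (s ^ (-2 : ℤ) * wfun s) ^ 2
          = s⁻¹ * (wfun s + (1/3) * wfun s ^ 2) := by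
        rw [key s hs]
        field_simp
      rw [h1, norm_mul, norm_inv]
    rw [Filter.tendsto_congr' heq]
    have hnorm : Filter.Tendsto (fun s : ℂ => ‖s‖) (𝓝[≠] 0) (𝓝[>] 0) := by
      rw [tendsto_nhdsWithin_iff]
      constructor
      · simpa using (continuous_norm.tendsto (0 : ℂ)).mono_left nhdsWithin_le_nhds
      · filter_upwards [self_mem_nhdsWithin] with s hs
        exact norm_pos_iff.mpr hs
    have h1 : Filter.Tendsto (fun s : ℂ => ‖s‖⁻¹) (𝓝[≠] 0) Filter.atTop :=
      tendsto_inv_nhdsGT_zero.comp hnorm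
    have h2 : Filter.Tendsto (fun s : ℂ => ‖wfun s + (1/3) * wfun s ^ 2‖) (𝓝[≠] 0)
        (𝓝 ‖wfun 0 + (1/3) * wfun 0 ^ 2‖) := by
      exact ((wfun_anal.add (analyticAt_const.mul (wfun_anal.pow 2))).continuousAt.norm.tendsto).mono_left
        nhdsWithin_le_nhds
    refine h1.atTop_mul_pos ?_ h2
    rw [wfun_zero]
    norm_num
end
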